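/- arXiv:2511.22152 — 5 statements merged into one kernel-verified Lean document; each statement's English description precedes it below -/
import Mathlib

section
/- For fixed z, the Bayes factor BF(z,k) = sqrt(1+k) * exp(-z²k/(2(1+k))) tends to infinity as k → ∞. -/
noncomputable def BF (z k : ℝ) : ℝ := Real.sqrt (1 + k) * Real.exp (-(z^2 * k) / (2 * (1 + k)))

theorem bf_tendsto_atTop (z : ℝ) :
    Filter.Tendsto (fun k => BF z k) Filter.atTop Filter.atTop := by
  have hsq : Filter.Tendsto Real.sqrt Filter.atTop Filter.atTop := by
    apply Filter.tendsto_atTop_atTop.2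
    intro b
    refine ⟨(max b 0) ^ 2, fun a ha => ?_⟩
    calc b ≤ max b 0 := le_max_left _ _
    _ = Real.sqrt ((max b 0) ^ 2) := (Real.sqrt_sq (le_max_right _ _)).symm
    _ ≤ Real.sqrt a := Real.sqrt_le_sqrt ha
  have hsqrt : Filter.Tendsto (fun k : ℝ => Real.sqrt (1 + k)) Filter.atTop Filter.atTop :=
    hsq.comp (Filter.tendsto_atTop_add_const_left _ 1 Filter.tendsto_id)
  have hinv : Filter.Tendsto (fun k : ℝ => (1 + k)⁻¹) Filter.atTop (nhds 0) :=
    (Filter.tendsto_atTop_add_const_left _ 1 Filter.tendsto_id).inv_tendsto_atTop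
  have h1 : Filter.Tendsto (fun k : ℝ => k / (1 + k)) Filter.atTop (nhds 1) := by
    have heq : (fun k : ℝ => k / (1 + k)) =ᶠ[Filter.atTop] fun k => 1 - (1 + k)⁻¹ := by
      filter_upwards [Filter.eventually_gt_atTop 0] with k hk
      field_simp
      ring
    rw [Filter.tendsto_congr' heq]
    simpa using (tendsto_const_nhds.sub hinv : Filter.Tendsto (fun k : ℝ => 1 - (1+k)⁻¹) _ _)
  have harg : Filter.Tendsto (fun k : ℝ => -(z^2 * k) / (2 * (1 + k))) Filter.atTop
      (nhds (-(z^2) / 2)) := by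
    have heq : (fun k : ℝ => -(z^2 * k) / (2 * (1 + k)))
        =ᶠ[Filter.atTop] fun k => (-(z^2) / 2) * (k / (1 + k)) := by
      filter_upwards [Filter.eventually_gt_atTop 0] with k hk
      have : (1 : ℝ) + k ≠ 0 := by positivity
      field_simp
    rw [Filter.tendsto_congr' heq]
    simpa using h1.const_mul (-(z^2) / 2)
  have hexp : Filter.Tendsto (fun k : ℝ => Real.exp (-(z^2 * k) / (2 * (1 + k)))) Filter.atTop
      (nhds (Real.exp (-(z^2) / 2))) := (Real.continuous_exp.tendsto _).comp harg
  have := hsqrt.atTop_mul_pos (Real.exp_pos _) hexp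
  simpa [BF] using this
end

section
/- For fixed z with |z| > 1, the function k ↦ BF(z,k) = sqrt(1+k)*exp(-z²k/(2(1+k))) attains a unique global minimum on [0,∞) at k = z² - 1, and the minimum value is strictly less than 1. -/
lemma bf_key (a t : ℝ) (ha : 0 < a) (ht : 0 < t) (hne : t ≠ a) :
    Real.log a + 1 < Real.log t + a / t := by
  have hu : 0 < a / t := div_pos ha ht
  have hu1 : a / t ≠ 1 := by
    intro h
    rw [div_eq_one_iff_eq ht.ne'] at h
    exact hne h.symm
  have h2 := Real.log_lt_sub_one_of_pos hu hu1
  rw [Real.log_div ha.ne' ht.ne'] at h2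
  linarith

theorem bf_unique_global_min (z : ℝ) (hz : 1 < |z|) :
    (∀ k : ℝ, 0 ≤ k → k ≠ z^2 - 1 → BF z (z^2 - 1) < BF z k) ∧
    BF z (z^2 - 1) < 1 := by
  have ha : 1 < z^2 := by
    have h := sq_abs z
    nlinarith [abs_nonneg z]
  have ha0 : 0 < z^2 := by linarith
  have hlog : ∀ k : ℝ, 0 ≤ k →
      Real.log (BF z k) = (Real.log (1 + k) - z^2 + z^2 / (1 + k)) / 2 := by
    intro k hk
    have ht : (0:ℝ) < 1 + k := by linarith
    unfold BF
    rw [Real.log_mul (Real.sqrt_pos.mpr ht).ne' (Real.exp_ne_zero _),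
      Real.log_sqrt ht.le, Real.log_exp]
    field_simp
    ring
  have hBFpos : ∀ k : ℝ, 0 ≤ k → 0 < BF z k := by
    intro k hk
    exact mul_pos (Real.sqrt_pos.mpr (by linarith)) (Real.exp_pos _)
  have hk0 : (0:ℝ) ≤ z^2 - 1 := by linarith
  have hlogmin : Real.log (BF z (z^2 - 1)) = (Real.log (z^2) - z^2 + 1) / 2 := by
    rw [hlog _ hk0]
    have : 1 + (z^2 - 1) = z^2 := by ring
    rw [this, div_self ha0.ne']
  constructor
  · intro k hk hkne
    rw [← Real.log_lt_log_iff (hBFpos _ hk0) (hBFpos _ hk), hlogmin, hlog _ hk]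
    have ht : (0:ℝ) < 1 + k := by linarith
    have hne : 1 + k ≠ z^2 := by
      intro h; apply hkne; linarith
    have := bf_key (z^2) (1 + k) ha0 ht hne
    linarith
  · have hlt : Real.log (z^2) < z^2 - 1 :=
      Real.log_lt_sub_one_of_pos ha0 (by linarith)
    have : Real.log (BF z (z^2 - 1)) < 0 := by rw [hlogmin]; linarith
    calc BF z (z^2 - 1) = Real.exp (Real.log (BF z (z^2 - 1))) :=
          (Real.exp_log (hBFpos _ hk0)).symm
      _ < Real.exp 0 := Real.exp_lt_exp.mpr this
      _ = 1 := Real.exp_zero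
end

section
/- For any real z with z² > 1, there exists a unique k* > 0 such that (1+k*)·ln(1+k*) = z²·k*. -/
open Real Set

noncomputable def hAux : ℝ → ℝ := fun k => (1 + k) * Real.log (1 + k) / k

lemma hAux_hasDerivAt {x : ℝ} (hx : 0 < x) :
    HasDerivAt hAux ((x - Real.log (1 + x)) / x ^ 2) x := by
  have h1x : (1 : ℝ) + x ≠ 0 := by linarith
  have hlog : HasDerivAt (fun k : ℝ => Real.log (1 + k)) (1 / (1 + x)) x := by
    have : HasDerivAt (fun k : ℝ => 1 + k) 1 x := (hasDerivAt_id x).const_add 1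
    simpa using this.log h1x
  have hmul : HasDerivAt (fun k : ℝ => (1 + k) * Real.log (1 + k))
      (1 * Real.log (1 + x) + (1 + x) * (1 / (1 + x))) x :=
    ((hasDerivAt_id x).const_add 1).mul hlog
  have hdiv := hmul.div (hasDerivAt_id x) (ne_of_gt hx)
  refine HasDerivAt.congr_deriv (f := hAux) hdiv ?_
  simp only [id]
  field_simp
  ring

lemma hAux_strictMonoOn : StrictMonoOn hAux (Set.Ioi (0 : ℝ)) := by
  apply strictMonoOn_of_deriv_pos (convex_Ioi 0)
  · exact fun x hx => ((hAux_hasDerivAt hx).differentiableAt.continuousAt).continuousWithinAt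
  · intro x hx
    rw [interior_Ioi] at hx
    replace hx : 0 < x := hx
    rw [(hAux_hasDerivAt hx).deriv]
    have hlog : Real.log (1 + x) < x := by
      have h1 : (1:ℝ) + x ≠ 1 := by intro h; nlinarith
      have := Real.log_lt_sub_one_of_pos (x := 1 + x) (by linarith) h1
      linarith
    exact div_pos (by linarith) (by positivity)

theorem flip_point_exists_unique (z : ℝ) (hz : 1 < z^2) :
    ∃! k : ℝ, 0 < k ∧ (1 + k) * Real.log (1 + k) = z^2 * k := by
  -- equation equivalent to hAux k = z^2 for k > 0
  have key : ∀ k : ℝ, 0 < k → ((1 + k) * Real.log (1 + k) = z^2 * k ↔ hAux k = z^2) := by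
    intro k hk
    unfold hAux
    rw [div_eq_iff (ne_of_gt hk)]
  set a : ℝ := z ^ 2 - 1 with ha
  set b : ℝ := Real.exp (z ^ 2) - 1 with hb
  have ha0 : 0 < a := by rw [ha]; linarith
  have hab : a < b := by
    have := Real.add_one_le_exp (z ^ 2)
    have h2 : z ^ 2 < Real.exp (z ^ 2) := lt_of_lt_of_le (by linarith) this
    rw [ha, hb]; linarith
  have hb0 : 0 < b := lt_trans ha0 hab
  -- h a < z^2
  have hha : hAux a < z ^ 2 := by
    have h1a : (0:ℝ) < 1 + a := by linarith
    have hlog : Real.log (1 + a) < a := by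
      have := Real.log_lt_sub_one_of_pos h1a (by intro h; rw [ha] at h; linarith)
      linarith
    have : hAux a < (1 + a) * a / a := by
      unfold hAux
      exact div_lt_div_of_pos_right (by nlinarith) ha0
    rw [mul_div_assoc, div_self (ne_of_gt ha0), mul_one] at this
    have h1a' : 1 + a = z ^ 2 := by rw [ha]; ring
    linarith
  -- h b > z^2
  have hhb : z ^ 2 < hAux b := by
    have hlogb : Real.log (1 + b) = z ^ 2 := by
      simp [hb, Real.exp_ne_zero]
    have h1 : (1:ℝ) < (1 + b) / b := by
      rw [lt_div_iff₀ hb0]; linarith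
    have hz2 : 0 < z ^ 2 := by linarith
    calc z ^ 2 = 1 * z ^ 2 := (one_mul _).symm
      _ < (1 + b) / b * z ^ 2 := by exact mul_lt_mul_of_pos_right h1 hz2
      _ = hAux b := by unfold hAux; rw [← hlogb]; ring
  -- continuity on [a,b]
  have hcont : ContinuousOn hAux (Set.Icc a b) := by
    intro x hx
    have hx0 : 0 < x := lt_of_lt_of_le ha0 hx.1
    exact ((hAux_hasDerivAt hx0).differentiableAt.continuousAt).continuousWithinAt
  have hivt := intermediate_value_Icc (le_of_lt hab) hcont
  have hz2mem : z ^ 2 ∈ Set.Icc (hAux a) (hAux b) := ⟨le_of_lt hha, le_of_lt hhb⟩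
  obtain ⟨k, hk_mem, hk_eq⟩ := hivt hz2mem
  have hk0 : 0 < k := lt_of_lt_of_le ha0 hk_mem.1
  refine ⟨k, ⟨hk0, (key k hk0).mpr hk_eq⟩, ?_⟩
  rintro y ⟨hy0, hy_eq⟩
  have hy' : hAux y = z ^ 2 := (key y hy0).mp hy_eq
  exact hAux_strictMonoOn.injOn (Set.mem_Ioi.mpr hy0) (Set.mem_Ioi.mpr hk0) (hy'.trans hk_eq.symm)
end

section
/- Let z² > 1 and let k* > 0 satisfy (1+k*)ln(1+k*) = z²k*. Then for all k with 0 < k < k*, BF(z,k) < 1, and for all k > k*, BF(z,k) > 1. -/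
private lemma f_hasDeriv (z x : ℝ) (hx : (0:ℝ) < 1 + x) :
    HasDerivAt (fun k => z^2 * k - (1+k) * Real.log (1+k)) (z^2 - (Real.log (1+x) + 1)) x := by
  have h1 : HasDerivAt (fun k : ℝ => z^2 * k) (z^2) x := by
    simpa using (hasDerivAt_id x).const_mul (z^2)
  have h2 : HasDerivAt (fun k : ℝ => 1 + k) 1 x := by
    simpa using (hasDerivAt_id x).const_add 1
  have h3 : HasDerivAt (fun k : ℝ => Real.log (1+k)) (1/(1+x)) x := by
    simpa [Function.comp_def] using (Real.hasDerivAt_log hx.ne').comp x h2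
  have h4 : HasDerivAt (fun k : ℝ => (1+k) * Real.log (1+k))
      (1 * Real.log (1+x) + (1+x) * (1/(1+x))) x := h2.mul h3
  have := h1.sub h4
  rw [mul_one_div_cancel hx.ne', one_mul] at this
  exact this

private lemma bf_lt_iff (z k : ℝ) (hk : (0:ℝ) < 1 + k) :
    (BF z k < 1 ↔ (1+k) * Real.log (1+k) < z^2 * k) := by
  unfold BF
  rw [Real.sqrt_eq_rpow, Real.rpow_def_of_pos hk, ← Real.exp_add, Real.exp_lt_one_iff,
    neg_div, ← sub_eq_add_neg]
  rw [show Real.log (1+k) * (1/2) - z^2*k / (2*(1+k)) < 0 ↔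
      Real.log (1+k) * (1/2) < z^2*k / (2*(1+k)) from sub_neg]
  rw [lt_div_iff₀ (by positivity : (0:ℝ) < 2*(1+k))]
  constructor
  · intro h; nlinarith
  · intro h; nlinarith
private lemma bf_gt_iff (z k : ℝ) (hk : (0:ℝ) < 1 + k) :
    (1 < BF z k ↔ z^2 * k < (1+k) * Real.log (1+k)) := by
  unfold BF
  rw [Real.sqrt_eq_rpow, Real.rpow_def_of_pos hk, ← Real.exp_add, Real.one_lt_exp_iff,
    neg_div, ← sub_eq_add_neg]
  rw [show (0:ℝ) < Real.log (1+k) * (1/2) - z^2*k / (2*(1+k)) ↔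
      z^2*k / (2*(1+k)) < Real.log (1+k) * (1/2) from sub_pos]
  rw [div_lt_iff₀ (by positivity : (0:ℝ) < 2*(1+k))]
  constructor
  · intro h; nlinarith
  · intro h; nlinarith

theorem bf_flip (z kstar : ℝ) (hz : 1 < z^2) (hk : 0 < kstar)
    (hflip : (1 + kstar) * Real.log (1 + kstar) = z^2 * kstar) :
    (∀ k : ℝ, 0 < k → k < kstar → BF z k < 1) ∧
    (∀ k : ℝ, kstar < k → 1 < BF z k) := by
  set f : ℝ → ℝ := fun k => z^2 * k - (1+k) * Real.log (1+k) with hf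
  have hconc : StrictConcaveOn ℝ (Set.Ici (0:ℝ)) f := by
    apply StrictAntiOn.strictConcaveOn_of_deriv (convex_Ici 0)
    · apply ContinuousOn.sub (by fun_prop)
      apply ContinuousOn.mul (by fun_prop)
      apply ContinuousOn.log (by fun_prop)
      intro x hx
      simp only [Set.mem_Ici] at hx
      positivity
    · intro x hx y hy hxy
      rw [interior_Ici, Set.mem_Ioi] at hx hy
      have hdx := (f_hasDeriv z x (by linarith)).deriv
      have hdy := (f_hasDeriv z y (by linarith)).deriv
      rw [hdx, hdy]
      have : Real.log (1+x) < Real.log (1+y) :=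
        Real.log_lt_log (by linarith) (by linarith)
      linarith
  have hf0 : f 0 = 0 := by simp [hf]
  have hfk : f kstar = 0 := by simp [hf]; linarith
  constructor
  · intro k hk0 hkk
    rw [bf_lt_iff z k (by linarith)]
    have hfpos : 0 < f k := by
      have hcomb := hconc.2 (Set.self_mem_Ici) (Set.mem_Ici.mpr hk.le)
        (by positivity : (0:ℝ) ≠ kstar).symm.symm
      -- use combination: k = (1 - k/kstar) • 0 + (k/kstar) • kstar
      have ha : (0:ℝ) < 1 - k/kstar := by
        rw [sub_pos, div_lt_one hk]; exact hkk
      have hb : (0:ℝ) < k/kstar := by positivity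
      have hab : (1 - k/kstar) + k/kstar = 1 := by ring
      have := hconc.2 (Set.self_mem_Ici) (Set.mem_Ici.mpr hk.le)
        (ne_of_lt hk) ha hb hab
      have hx : (1 - k/kstar) • (0:ℝ) + (k/kstar) • kstar = k := by
        rw [smul_eq_mul, smul_eq_mul, mul_zero, zero_add, div_mul_cancel₀ k hk.ne']
      rw [hx, hf0, hfk] at this
      simpa using this
    simpa [hf] using hfpos
  · intro k hkk
    have hk0 : 0 < k := lt_trans hk hkk
    rw [bf_gt_iff z k (by linarith)]
    have hfneg : f k < 0 := by
      have ha : (0:ℝ) < 1 - kstar/k := by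
        rw [sub_pos, div_lt_one hk0]; exact hkk
      have hb : (0:ℝ) < kstar/k := by positivity
      have hab : (1 - kstar/k) + kstar/k = 1 := by ring
      have := hconc.2 (Set.self_mem_Ici) (Set.mem_Ici.mpr hk0.le)
        (ne_of_lt hk0) ha hb hab
      have hx : (1 - kstar/k) • (0:ℝ) + (kstar/k) • k = kstar := by
        rw [smul_eq_mul, smul_eq_mul, mul_zero, zero_add, div_mul_cancel₀ kstar hk0.ne']
      rw [hx, hf0, hfk] at this
      have : (kstar/k) * f k < 0 := by simpa using this
      by_contra h
      push_neg at h
      nlinarith [mul_nonneg hb.le h]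
    have := hfneg
    simp only [hf, sub_neg] at this
    linarith
end

section
/- BFR paradox: for any z with |z| > 1.96 and any n > 0, there exist prior variances 0 < τ₁² < τ₂² such that BF(z, n·τ₁²) < 1 and BF(z, n·τ₂²) > 1. -/
theorem bfr_paradox (z n : ℝ) (hz : 1.96 < |z|) (hn : 0 < n) :
    ∃ τ₁ τ₂ : ℝ, 0 < τ₁^2 ∧ τ₁^2 < τ₂^2 ∧
      BF z (n * τ₁^2) < 1 ∧ 1 < BF z (n * τ₂^2) := by
  have hz2 : (1.96:ℝ)^2 < z^2 := by
    have h := pow_lt_pow_left₀ hz (by norm_num : (0:ℝ) ≤ 1.96) (by norm_num : 2 ≠ 0)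
    rwa [sq_abs] at h
  have hz2pos : 0 < z^2 := by nlinarith
  have hek : (1:ℝ) < Real.exp (z^2) := by
    have := Real.add_one_le_exp (z^2); linarith
  refine ⟨Real.sqrt (1/n), Real.sqrt (Real.exp (z^2) / n), ?_, ?_, ?_, ?_⟩
  · rw [Real.sq_sqrt (by positivity)]; positivity
  · rw [Real.sq_sqrt (by positivity), Real.sq_sqrt (by positivity)]
    gcongr
  · rw [Real.sq_sqrt (by positivity)]
    have hk1 : n * (1/n) = 1 := by field_simp
    rw [hk1]
    unfold BF
    have h1 : -(z^2 * 1) / (2 * (1+1)) = -(z^2/4) := by ring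
    rw [h1]
    have hs : Real.sqrt (1+1) < Real.exp (z^2/4) := by
      have h2 : Real.exp (z^2/4) > 1.5 := by
        have := Real.add_one_le_exp (z^2/4); nlinarith
      have h3 : Real.sqrt (1+1) < 1.5 := by
        rw [show (1:ℝ)+1 = 2 by norm_num]
        nlinarith [Real.sq_sqrt (by norm_num : (0:ℝ) ≤ 2), Real.sqrt_nonneg 2]
      linarith
    calc Real.sqrt (1+1) * Real.exp (-(z^2/4))
        < Real.exp (z^2/4) * Real.exp (-(z^2/4)) :=
          mul_lt_mul_of_pos_right hs (Real.exp_pos _)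
      _ = 1 := by rw [← Real.exp_add]; norm_num
  · rw [Real.sq_sqrt (by positivity)]
    have hk1 : n * (Real.exp (z^2) / n) = Real.exp (z^2) := by field_simp
    rw [hk1]
    unfold BF
    set k := Real.exp (z^2) with hkdef
    have hk0 : 0 < k := Real.exp_pos _
    have h1k : 0 < 1 + k := by linarith
    set a := -(z^2 * k) / (2 * (1 + k)) with hadef
    have hs : Real.exp (-a) < Real.sqrt (1 + k) := by
      rw [Real.lt_sqrt (Real.exp_nonneg _)]
      have hsq : Real.exp (-a) ^ 2 = Real.exp (z^2 * k / (1 + k)) := by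
        rw [← Real.exp_nat_mul]
        congr 1
        rw [hadef]
        field_simp
        ring
      rw [hsq]
      have hlt : z^2 * k / (1 + k) < z^2 := by
        rw [div_lt_iff₀ h1k]
        nlinarith
      have := Real.exp_lt_exp.mpr hlt
      rw [← hkdef] at this
      linarith
    calc (1:ℝ) = Real.exp (-a) * Real.exp a := by rw [← Real.exp_add]; norm_num
      _ < Real.sqrt (1 + k) * Real.exp a :=
          mul_lt_mul_of_pos_right hs (Real.exp_pos _)
end
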